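/- Let f : ℝⁿ → ℝ be differentiable with K-Lipschitz gradient, and let x₀, x₁ ∈ ℝⁿ. Then for a one-step perturbation with step size α, |f(x₁ + α·sign(∇f(x₁))) − f(x₁)| ≤ α‖∇f(x₁)‖₁ + (K/2)α²n ≤ α‖∇f(x₀)‖₁ + √n αK‖x₁ − x₀‖₂ + (K/2)α²n. -/

import Mathlib

private lemma mul_sign_eq_abs (x : ℝ) : x * Real.sign x = |x| := by
  rcases lt_trichotomy x 0 with h | h | h
  · rw [Real.sign_of_neg h, abs_of_neg h]; ring
  · simp [h]
  · rw [Real.sign_of_pos h, abs_of_pos h]; ring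

private lemma abs_sign_le_one (x : ℝ) : |Real.sign x| ≤ 1 := by
  rcases Real.sign_apply_eq x with h | h | h <;> rw [h] <;> norm_num

/-- Descent lemma: for `f` with `K`-Lipschitz gradient (`K ≥ 0`),
`|f(x+h) - f(x) - ⟪∇f(x), h⟫| ≤ K/2 ‖h‖²`. -/
private lemma descent_lemma {E : Type*} [NormedAddCommGroup E] [InnerProductSpace ℝ E]
    [CompleteSpace E] (f : E → ℝ) (K : ℝ) (hK : 0 ≤ K)
    (hdiff : Differentiable ℝ f)
    (hlip : ∀ u v : E, ‖gradient f u - gradient f v‖ ≤ K * ‖u - v‖)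
    (x h : E) :
    |f (x + h) - f x - inner ℝ (gradient f x) h| ≤ K / 2 * ‖h‖ ^ 2 := by
  have hgcont : Continuous (gradient f) := by
    refine (LipschitzWith.of_dist_le_mul (K := ⟨K, hK⟩) ?_).continuous
    intro u v
    rw [dist_eq_norm, dist_eq_norm]; exact hlip u v
  set φ' : ℝ → ℝ := fun t => inner ℝ (gradient f (x + t • h)) h with hφ'def
  have hline : ∀ t : ℝ, HasDerivAt (fun t : ℝ => x + t • h) h t := by
    intro t
    simpa using ((hasDerivAt_id t).smul_const h).const_add x
  have hφ : ∀ t : ℝ, HasDerivAt (fun t : ℝ => f (x + t • h)) (φ' t) t := by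
    intro t
    have := ((hdiff (x + t • h)).hasGradientAt.hasFDerivAt).comp_hasDerivAt t (hline t)
    exact this.congr_deriv (by simp [hφ'def])
  have hcont : Continuous φ' := by
    exact ((hgcont.comp (continuous_const.add (continuous_id.smul continuous_const)))).inner
      continuous_const
  have key : ∫ t in (0:ℝ)..1, φ' t = f (x + h) - f x := by
    have := intervalIntegral.integral_eq_sub_of_hasDerivAt (f := fun t : ℝ => f (x + t • h))
      (f' := φ') (a := 0) (b := 1) (fun t _ => hφ t)
      (hcont.intervalIntegrable 0 1)
    simpa using this
  have hφ0 : φ' 0 = inner ℝ (gradient f x) h := by simp [hφ'def]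
  have eq2 : f (x + h) - f x - inner ℝ (gradient f x) h
      = ∫ t in (0:ℝ)..1, (φ' t - φ' 0) := by
    rw [intervalIntegral.integral_sub (hcont.intervalIntegrable 0 1)
      (intervalIntegrable_const), key, intervalIntegral.integral_const, hφ0]
    simp
  rw [eq2]
  have bound : ‖∫ t in (0:ℝ)..1, (φ' t - φ' 0)‖ ≤ |∫ t in (0:ℝ)..1, K * ‖h‖ ^ 2 * t| := by
    refine intervalIntegral.norm_integral_le_abs_of_norm_le ?_
      ((continuous_const.mul continuous_id).intervalIntegrable 0 1)
    refine (MeasureTheory.ae_restrict_iff' measurableSet_uIoc).2 ?_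
    filter_upwards with t ht
    have ht' : t ∈ Set.Ioc (0:ℝ) 1 := by simpa [Set.uIoc_of_le (zero_le_one)] using ht
    have h1 : φ' t - φ' 0 = inner ℝ (gradient f (x + t • h) - gradient f x) h := by
      rw [hφ0, hφ'def, inner_sub_left]
    rw [Real.norm_eq_abs, h1]
    calc |inner ℝ (gradient f (x + t • h) - gradient f x) h|
        ≤ ‖gradient f (x + t • h) - gradient f x‖ * ‖h‖ := abs_real_inner_le_norm _ _
      _ ≤ (K * ‖(x + t • h) - x‖) * ‖h‖ := by
          exact mul_le_mul_of_nonneg_right (hlip _ _) (norm_nonneg _)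
      _ = K * ‖h‖ ^ 2 * t := by
          have : (x + t • h) - x = t • h := by abel
          rw [this, norm_smul, Real.norm_eq_abs, abs_of_nonneg ht'.1.le]
          ring
  have hint : ∫ t in (0:ℝ)..1, K * ‖h‖ ^ 2 * t = K / 2 * ‖h‖ ^ 2 := by
    rw [intervalIntegral.integral_const_mul, integral_id]
    ring
  calc |∫ t in (0:ℝ)..1, (φ' t - φ' 0)| ≤ |∫ t in (0:ℝ)..1, K * ‖h‖ ^ 2 * t| := bound
    _ = K / 2 * ‖h‖ ^ 2 := by
        rw [hint, abs_of_nonneg (by positivity)]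

/-- Single-iteration version of Theorem 2: the change of prediction at `x₁` under a
signed-gradient step is bounded by `α‖∇f(x₁)‖₁ + (K/2)α²n`, which in turn is bounded by
the attack sensitivity `α‖∇f(x₀)‖₁` of a neighbor `x₀` plus `√n·α·K·‖x₁ - x₀‖₂`
plus the same second-order term. -/
theorem one_step_attack_change_bound {n : ℕ}
    (f : EuclideanSpace ℝ (Fin n) → ℝ) (K α : ℝ)
    (hdiff : Differentiable ℝ f) (hα : 0 < α)
    (hlip : ∀ u v : EuclideanSpace ℝ (Fin n),
      ‖gradient f u - gradient f v‖ ≤ K * ‖u - v‖)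
    (x₀ x₁ : EuclideanSpace ℝ (Fin n)) :
    |f (x₁ + α • (WithLp.equiv 2 (Fin n → ℝ)).symm (fun i => Real.sign (gradient f x₁ i)))
        - f x₁| ≤ α * (∑ i, |gradient f x₁ i|) + K / 2 * α ^ 2 * n ∧
      α * (∑ i, |gradient f x₁ i|) + K / 2 * α ^ 2 * n ≤
        α * (∑ i, |gradient f x₀ i|) + Real.sqrt n * α * K * ‖x₁ - x₀‖
          + K / 2 * α ^ 2 * n := by
  -- Part 2 first, it works for all n.
  have part2 : α * (∑ i, |gradient f x₁ i|) + K / 2 * α ^ 2 * n ≤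
      α * (∑ i, |gradient f x₀ i|) + Real.sqrt n * α * K * ‖x₁ - x₀‖
        + K / 2 * α ^ 2 * n := by
    have habs : ∑ i, |gradient f x₁ i| ≤ ∑ i, |gradient f x₀ i|
        + Real.sqrt n * ‖gradient f x₁ - gradient f x₀‖ := by
      have h1 : ∀ i, |gradient f x₁ i| ≤ |gradient f x₀ i|
          + |gradient f x₁ i - gradient f x₀ i| := by
        intro i
        calc |gradient f x₁ i| = |gradient f x₀ i + (gradient f x₁ i - gradient f x₀ i)| := by
              ring_nf
          _ ≤ _ := abs_add_le _ _
      have h2 : ∑ i, |gradient f x₁ i - gradient f x₀ i|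
          ≤ Real.sqrt n * ‖gradient f x₁ - gradient f x₀‖ := by
        set d : EuclideanSpace ℝ (Fin n) := gradient f x₁ - gradient f x₀ with hd
        set u : EuclideanSpace ℝ (Fin n) :=
          (WithLp.equiv 2 (Fin n → ℝ)).symm (fun i => |d i|) with hu
        set v : EuclideanSpace ℝ (Fin n) :=
          (WithLp.equiv 2 (Fin n → ℝ)).symm (fun _ => (1:ℝ)) with hv
        have hinner : (inner ℝ u v : ℝ) = ∑ i, |d i| := by
          simp [PiLp.inner_apply, hu, hv]
        have hnu : ‖u‖ = ‖d‖ := by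
          rw [EuclideanSpace.norm_eq, EuclideanSpace.norm_eq]
          congr 1
          refine Finset.sum_congr rfl fun i _ => ?_
          simp [hu]
        have hnv : ‖v‖ = Real.sqrt n := by
          rw [EuclideanSpace.norm_eq]
          simp [hv]
        have hdp : ∀ i, d i = gradient f x₁ i - gradient f x₀ i := by
          intro i; simp [hd]
        calc ∑ i, |gradient f x₁ i - gradient f x₀ i| = ∑ i, |d i| := by
              refine Finset.sum_congr rfl fun i _ => ?_; rw [hdp]
          _ = inner ℝ u v := hinner.symm
          _ ≤ ‖u‖ * ‖v‖ := real_inner_le_norm u v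
          _ = Real.sqrt n * ‖d‖ := by rw [hnu, hnv]; ring
      calc ∑ i, |gradient f x₁ i|
          ≤ ∑ i, (|gradient f x₀ i| + |gradient f x₁ i - gradient f x₀ i|) :=
            Finset.sum_le_sum fun i _ => h1 i
        _ = ∑ i, |gradient f x₀ i| + ∑ i, |gradient f x₁ i - gradient f x₀ i| :=
            Finset.sum_add_distrib
        _ ≤ _ := by linarith [h2]
    have hgl : ‖gradient f x₁ - gradient f x₀‖ ≤ K * ‖x₁ - x₀‖ := hlip x₁ x₀
    have hsq : (0:ℝ) ≤ Real.sqrt n := Real.sqrt_nonneg _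
    nlinarith [hα.le, mul_le_mul_of_nonneg_left hgl hsq,
      mul_le_mul_of_nonneg_left habs hα.le]
  refine ⟨?_, part2⟩
  -- Part 1.
  rcases Nat.eq_zero_or_pos n with hn | hn
  · subst hn
    haveI : Subsingleton (EuclideanSpace ℝ (Fin 0)) :=
      ⟨fun a b => by ext i; exact i.elim0⟩
    have hx : x₁ + α • (WithLp.equiv 2 (Fin 0 → ℝ)).symm
        (fun i => Real.sign (gradient f x₁ i)) = x₁ := Subsingleton.elim _ _
    rw [hx]
    simp
  · -- n ≥ 1, so K ≥ 0.
    have hK : 0 ≤ K := by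
      set e : EuclideanSpace ℝ (Fin n) := EuclideanSpace.single ⟨0, hn⟩ (1:ℝ) with he
      have h0 := hlip 0 e
      have hne : ‖(0:EuclideanSpace ℝ (Fin n)) - e‖ = 1 := by
        rw [zero_sub, norm_neg, he, EuclideanSpace.norm_single]
        norm_num
      rw [hne, mul_one] at h0
      exact le_trans (norm_nonneg _) h0
    set g : EuclideanSpace ℝ (Fin n) := gradient f x₁ with hg
    set s : EuclideanSpace ℝ (Fin n) :=
      (WithLp.equiv 2 (Fin n → ℝ)).symm (fun i => Real.sign (g i)) with hs
    have hinner : (inner ℝ g (α • s) : ℝ) = α * ∑ i, |g i| := by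
      rw [real_inner_smul_right]
      congr 1
      rw [PiLp.inner_apply]
      refine Finset.sum_congr rfl fun i _ => ?_
      simp only [hs, WithLp.equiv_symm_apply, WithLp.ofLp_toLp, RCLike.inner_apply, conj_trivial]
      rw [mul_comm]; exact mul_sign_eq_abs (g i)
    have hnorm_s_sq : ‖s‖ ^ 2 ≤ n := by
      have : ‖s‖ = Real.sqrt (∑ i, ‖s i‖ ^ 2) := EuclideanSpace.norm_eq s
      rw [this, Real.sq_sqrt (Finset.sum_nonneg fun i _ => sq_nonneg _)]
      calc ∑ i, ‖s i‖ ^ 2 ≤ ∑ _i : Fin n, (1:ℝ) := by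
            refine Finset.sum_le_sum fun i _ => ?_
            have h1 : ‖s i‖ ≤ 1 := by
              simp only [hs, WithLp.equiv_symm_apply, WithLp.ofLp_toLp, Real.norm_eq_abs]
              exact abs_sign_le_one (g i)
            calc ‖s i‖ ^ 2 ≤ 1 ^ 2 := by
                  exact pow_le_pow_left₀ (norm_nonneg _) h1 2
              _ = 1 := one_pow 2
        _ = n := by simp
    have hnh : ‖α • s‖ ^ 2 ≤ α ^ 2 * n := by
      rw [norm_smul, mul_pow, Real.norm_eq_abs, sq_abs]
      exact mul_le_mul_of_nonneg_left hnorm_s_sq (sq_nonneg α)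
    have hdesc := descent_lemma f K hK hdiff hlip x₁ (α • s)
    have htri : |f (x₁ + α • s) - f x₁| ≤
        |f (x₁ + α • s) - f x₁ - inner ℝ g (α • s)| + |(inner ℝ g (α • s) : ℝ)| := by
      calc |f (x₁ + α • s) - f x₁|
          = |(f (x₁ + α • s) - f x₁ - inner ℝ g (α • s)) + inner ℝ g (α • s)| := by ring_nf
        _ ≤ _ := abs_add_le _ _
    have hinner_nonneg : (0:ℝ) ≤ α * ∑ i, |g i| :=
      mul_nonneg hα.le (Finset.sum_nonneg fun i _ => abs_nonneg _)
    have habs_inner : |(inner ℝ g (α • s) : ℝ)| = α * ∑ i, |g i| := by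
      rw [hinner, abs_of_nonneg hinner_nonneg]
    have hlast : K / 2 * ‖α • s‖ ^ 2 ≤ K / 2 * α ^ 2 * n := by
      calc K / 2 * ‖α • s‖ ^ 2 ≤ K / 2 * (α ^ 2 * n) :=
            mul_le_mul_of_nonneg_left hnh (by linarith)
        _ = K / 2 * α ^ 2 * n := by ring
    calc |f (x₁ + α • s) - f x₁|
        ≤ |f (x₁ + α • s) - f x₁ - inner ℝ g (α • s)| + |(inner ℝ g (α • s) : ℝ)| := htri
      _ ≤ K / 2 * ‖α • s‖ ^ 2 + α * ∑ i, |g i| := by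
          rw [habs_inner]; exact add_le_add_left hdesc _
      _ ≤ α * (∑ i, |g i|) + K / 2 * α ^ 2 * n := by linarith
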